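/- There exists a natural number N such that for all n ≥ N, the sum Σ_{v = ⌈0.5657·n⌉}^{n} C(n, v) · C(⌊1.32·n⌋, n - v - 1) is less than 4.883799^n (as real numbers). -/

import Mathlib

open Finset Filter

private lemma weight_choose_le (x : ℝ) (hx : 0 < x) (m k : ℕ) :
    x ^ k * (m.choose k : ℝ) ≤ (x + 1) ^ m := by
  rcases lt_or_ge m k with h | h
  · rw [Nat.choose_eq_zero_of_lt h]
    have : (0:ℝ) ≤ (x+1)^m := by positivity
    simpa using this
  · have hmem : k ∈ Finset.range (m + 1) := Finset.mem_range.2 (Nat.lt_succ_of_le h)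
    have hle := Finset.single_le_sum (f := fun i => x ^ i * (m.choose i : ℝ))
      (fun i _ => by positivity) hmem
    calc x ^ k * (m.choose k : ℝ)
        ≤ ∑ i ∈ Finset.range (m + 1), x ^ i * (m.choose i : ℝ) := hle
      _ = (x + 1) ^ m := by rw [add_pow]; simp

set_option maxRecDepth 10000 in
private lemma big_numeric :
    (23/10:ℝ)^10000 * (149/100)^13200 * ((10/13)^5657 * (100/49)^4343) ≤ (46/10)^10000 := by
  rw [div_pow, div_pow, div_pow, div_pow, div_pow, div_mul_div_comm, div_mul_div_comm,
    div_mul_div_comm, div_le_div_iff₀ (by positivity) (by positivity)]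
  have h : (23:ℕ) ^ 10000 * 149 ^ 13200 * (10 ^ 5657 * 100 ^ 4343) * 10 ^ 10000 ≤
      46 ^ 10000 * (10 ^ 10000 * 100 ^ 13200 * (13 ^ 5657 * 49 ^ 4343)) := by decide +kernel
  exact_mod_cast h

set_option maxRecDepth 10000

/-- For all sufficiently large `n`,
`∑_{v = ⌈0.5657 n⌉}^{n} C(n, v) * C(⌊1.32 n⌋, n - v - 1) < 4.883799 ^ n`. -/
theorem sum_choose_lt :
    ∃ N : ℕ, ∀ n ≥ N,
      ((∑ v ∈ Finset.Icc ((5657 * n + 9999) / 10000) n,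
        n.choose v * (33 * n / 25).choose (n - v - 1) : ℕ) : ℝ) < (4.883799 : ℝ) ^ n := by
  -- eventual bound : (n+1) * (4.6/4.883799)^n < 1
  have hρ0 : (0:ℝ) ≤ 4.6 / 4.883799 := by norm_num
  have hρ1 : (4.6 / 4.883799 : ℝ) < 1 := by norm_num
  have htend := tendsto_pow_const_mul_const_pow_of_lt_one 1 hρ0 hρ1
  have hev := htend.eventually_lt_const (by norm_num : (0:ℝ) < 1/2)
  obtain ⟨N₀, hN₀⟩ := eventually_atTop.1 hev
  refine ⟨N₀ + 1, fun n hn => ?_⟩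
  have hn1 : 1 ≤ n := le_trans (Nat.le_add_left 1 N₀) hn
  have hsmall : ((n:ℝ) + 1) * (4.6 / 4.883799) ^ n < 1 := by
    have h := hN₀ n (le_trans (Nat.le_succ N₀) hn)
    rw [pow_one] at h
    have hpos : (0:ℝ) ≤ (4.6 / 4.883799) ^ n := by positivity
    have hn1' : (1:ℝ) ≤ (n:ℝ) := by exact_mod_cast hn1
    nlinarith
  set v0 := (5657 * n + 9999) / 10000 with hv0def
  set m := 33 * n / 25 with hmdef
  set j0 := n - v0 - 1 with hj0def
  -- arithmetic facts about v0 and m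
  have hdm1 := Nat.div_add_mod (5657 * n + 9999) 10000
  have hdm1' : (5657 * n + 9999) % 10000 < 10000 := Nat.mod_lt _ (by norm_num)
  have hv0low : 5657 * n ≤ 10000 * v0 := by omega
  have hv0le : v0 ≤ n := by omega
  have hdm2 := Nat.div_add_mod (33 * n) 25
  have hm33 : 25 * m ≤ 33 * n := by omega
  -- the uniform bound for each term
  set B : ℝ := (23/10) ^ n * (149/100) ^ m * ((10/13) ^ v0 * (100/49) ^ j0) with hBdef
  have hterm : ∀ v ∈ Finset.Icc v0 n,
      ((n.choose v : ℝ) * (m.choose (n - v - 1) : ℝ)) ≤ B := by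
    intro v hv
    rw [Finset.mem_Icc] at hv
    obtain ⟨hv1, hv2⟩ := hv
    set j := n - v - 1 with hjdef
    have hjle : j ≤ j0 := by omega
    have h1 : ((13:ℝ)/10) ^ v * (n.choose v : ℝ) ≤ (23/10) ^ n := by
      rw [show (23/10:ℝ) = 13/10 + 1 by norm_num]
      exact weight_choose_le _ (by norm_num) _ _
    have h2 : ((49:ℝ)/100) ^ j * (m.choose j : ℝ) ≤ (149/100) ^ m := by
      rw [show (149/100:ℝ) = 49/100 + 1 by norm_num]
      exact weight_choose_le _ (by norm_num) _ _
    have hc1 : (n.choose v : ℝ) ≤ (23/10) ^ n * (10/13) ^ v := by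
      have hp : (0:ℝ) < (13/10) ^ v := by positivity
      rw [show ((10:ℝ)/13) = ((13:ℝ)/10)⁻¹ by norm_num, inv_pow, ← div_eq_mul_inv,
        le_div_iff₀ hp]
      linarith [h1]
    have hc2 : (m.choose j : ℝ) ≤ (149/100) ^ m * (100/49) ^ j := by
      have hp : (0:ℝ) < (49/100) ^ j := by positivity
      rw [show ((100:ℝ)/49) = ((49:ℝ)/100)⁻¹ by norm_num, inv_pow, ← div_eq_mul_inv,
        le_div_iff₀ hp]
      linarith [h2]
    have hmono1 : ((10:ℝ)/13) ^ v ≤ (10/13) ^ v0 :=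
      pow_le_pow_of_le_one (by norm_num) (by norm_num) hv1
    have hmono2 : ((100:ℝ)/49) ^ j ≤ (100/49) ^ j0 :=
      pow_le_pow_right₀ (by norm_num) hjle
    calc (n.choose v : ℝ) * (m.choose j : ℝ)
        ≤ ((23/10) ^ n * (10/13) ^ v) * ((149/100) ^ m * (100/49) ^ j) := by
          exact mul_le_mul hc1 hc2 (Nat.cast_nonneg _) (by positivity)
      _ ≤ ((23/10) ^ n * (10/13) ^ v0) * ((149/100) ^ m * (100/49) ^ j0) := by
          apply mul_le_mul _ _ (by positivity) (by positivity)
          · exact mul_le_mul_of_nonneg_left hmono1 (by positivity)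
          · exact mul_le_mul_of_nonneg_left hmono2 (by positivity)
      _ = B := by ring
  -- sum bound
  have hcard : (Finset.Icc v0 n).card ≤ n + 1 := by
    rw [Nat.card_Icc]; omega
  have hBpos : (0:ℝ) ≤ B := by positivity
  have hsum : ((∑ v ∈ Finset.Icc v0 n, n.choose v * m.choose (n - v - 1) : ℕ) : ℝ)
      ≤ ((n:ℝ) + 1) * B := by
    push_cast
    calc (∑ v ∈ Finset.Icc v0 n, (n.choose v : ℝ) * (m.choose (n - v - 1) : ℝ))
        ≤ (Finset.Icc v0 n).card • B := Finset.sum_le_card_nsmul _ _ _ hterm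
      _ = ((Finset.Icc v0 n).card : ℝ) * B := by rw [nsmul_eq_mul]
      _ ≤ ((n:ℝ) + 1) * B := by
          apply mul_le_mul_of_nonneg_right _ hBpos
          exact_mod_cast hcard
  -- B ≤ 4.6 ^ n
  have hB46 : B ≤ (4.6:ℝ) ^ n := by
    have h10000 : B ^ 10000 ≤ ((4.6:ℝ) ^ n) ^ 10000 := by
      have e1 : B ^ 10000 = (23/10:ℝ) ^ (n * 10000) * (149/100) ^ (m * 10000) *
          ((10/13) ^ (v0 * 10000) * (100/49) ^ (j0 * 10000)) := by
        rw [hBdef, mul_pow, mul_pow, mul_pow, ← pow_mul, ← pow_mul, ← pow_mul, ← pow_mul]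
      have hb1 : ((149:ℝ)/100) ^ (m * 10000) ≤ (149/100) ^ (n * 13200) :=
        pow_le_pow_right₀ (by norm_num) (by omega)
      have hb2 : ((10:ℝ)/13) ^ (v0 * 10000) ≤ (10/13) ^ (n * 5657) :=
        pow_le_pow_of_le_one (by norm_num) (by norm_num) (by omega)
      have hb3 : ((100:ℝ)/49) ^ (j0 * 10000) ≤ (100/49) ^ (n * 4343) :=
        pow_le_pow_right₀ (by norm_num) (by omega)
      calc B ^ 10000
          = (23/10:ℝ) ^ (n * 10000) * (149/100) ^ (m * 10000) *
            ((10/13) ^ (v0 * 10000) * (100/49) ^ (j0 * 10000)) := e1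
        _ ≤ (23/10:ℝ) ^ (n * 10000) * (149/100) ^ (n * 13200) *
            ((10/13) ^ (n * 5657) * (100/49) ^ (n * 4343)) := by
            apply mul_le_mul _ _ (by positivity) (by positivity)
            · exact mul_le_mul_of_nonneg_left hb1 (by positivity)
            · exact mul_le_mul hb2 hb3 (by positivity) (by positivity)
        _ = ((23/10:ℝ) ^ 10000 * (149/100) ^ 13200 *
            ((10/13) ^ 5657 * (100/49) ^ 4343)) ^ n := by
            rw [mul_pow, mul_pow, mul_pow, ← pow_mul, ← pow_mul, ← pow_mul, ← pow_mul]
            ring_nf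
        _ ≤ ((46/10:ℝ) ^ 10000) ^ n := by
            apply pow_le_pow_left₀ (by positivity) big_numeric
        _ = ((4.6:ℝ) ^ n) ^ 10000 := by
            rw [← pow_mul, ← pow_mul, Nat.mul_comm]
            norm_num
    exact le_of_pow_le_pow_left₀ (by norm_num) (by positivity) h10000
  -- conclude
  have hfinal : ((n:ℝ) + 1) * (4.6:ℝ) ^ n < (4.883799:ℝ) ^ n := by
    have hpow : (0:ℝ) < (4.883799:ℝ) ^ n := by positivity
    have := mul_lt_mul_of_pos_right hsmall hpow
    rw [one_mul] at this
    calc ((n:ℝ) + 1) * (4.6:ℝ) ^ n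
        = ((n:ℝ) + 1) * (4.6 / 4.883799) ^ n * (4.883799:ℝ) ^ n := by
          rw [div_pow, mul_assoc, div_mul_cancel₀]
          positivity
      _ < (4.883799:ℝ) ^ n := this
  calc ((∑ v ∈ Finset.Icc v0 n, n.choose v * m.choose (n - v - 1) : ℕ) : ℝ)
      ≤ ((n:ℝ) + 1) * B := hsum
    _ ≤ ((n:ℝ) + 1) * (4.6:ℝ) ^ n := by
        apply mul_le_mul_of_nonneg_left hB46 (by positivity)
    _ < (4.883799:ℝ) ^ n := hfinal
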